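/- Let α ∈ ℝ be irrational and let P(x) = αx^2 + bx + c with b, c ∈ ℝ. Then for every ε > 0 there exists m_0 depending only on α and ε (not on b or c) such that for all m ≥ m_0, |∑_{j=1}^m e(P(j))| ≤ εm, where e(x) = exp(2πix). -/

import Mathlib

open Finset

noncomputable def ee (x : ℝ) : ℂ := Complex.exp ((2 * Real.pi * x : ℝ) * Complex.I)

lemma ee_add (x y : ℝ) : ee (x + y) = ee x * ee y := by
  rw [ee, ee, ee, ← Complex.exp_add]
  push_cast
  ring_nf

lemma abs_ee (x : ℝ) : ‖ee x‖ = 1 := Complex.norm_exp_ofReal_mul_I _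

lemma conj_ee (x : ℝ) : (starRingEnd ℂ) (ee x) = ee (-x) := by
  rw [ee, ee, ← Complex.exp_conj, map_mul, Complex.conj_I, Complex.conj_ofReal]
  push_cast
  ring_nf

lemma ee_pow (x : ℝ) (n : ℕ) : (ee x) ^ n = ee (n * x) := by
  rw [ee, ee, ← Complex.exp_nat_mul]
  push_cast
  ring_nf

lemma ee_zero : ee 0 = 1 := by simp [ee]

lemma ee_ne_one {x : ℝ} (hx : Irrational x) : ee x ≠ 1 := by
  rw [ee, Ne, Complex.exp_eq_one_iff]
  rintro ⟨n, hn⟩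
  apply hx
  refine ⟨(n : ℚ), ?_⟩
  have hn' : ((2 * Real.pi * x : ℝ) : ℂ) * Complex.I = ((2 * Real.pi * (n : ℝ) : ℝ) : ℂ) * Complex.I := by
    rw [hn]; push_cast; ring
  have h2 := Complex.ofReal_injective (mul_right_cancel₀ Complex.I_ne_zero hn')
  have h2π : (2 * Real.pi : ℝ) ≠ 0 := by positivity
  have : x = (n : ℝ) := by
    have := mul_left_cancel₀ h2π (by linarith [h2] : (2 * Real.pi) * x = (2 * Real.pi) * (n:ℝ))
    exact this
  push_cast
  linarith [this]


lemma geom_bound (z : ℂ) (hz : ‖z‖ = 1) (h1 : z ≠ 1) (m : ℕ) :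
    ‖∑ j ∈ Finset.Ioc 0 m, z ^ j‖ ≤ 2 / ‖z - 1‖ := by
  have hIoc : Finset.Ioc 0 m = Finset.Ico 1 (m + 1) := by
    ext x; simp [Nat.lt_succ_iff, Nat.succ_le_iff]
  have hpos : 0 < ‖z - 1‖ := by
    rw [norm_pos_iff]
    exact sub_ne_zero.mpr h1
  rw [hIoc, geom_sum_Ico h1 (by omega), norm_div]
  refine (div_le_div_iff_of_pos_right hpos).mpr ?_
  calc ‖z ^ (m+1) - z ^ 1‖
      ≤ ‖z ^ (m+1)‖ + ‖z ^ 1‖ := norm_sub_le _ _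
    _ ≤ 2 := by simp [map_pow, hz]; norm_num

lemma sqrt_add_le' (x y : ℝ) (hx : 0 ≤ x) (hy : 0 ≤ y) :
    Real.sqrt (x + y) ≤ Real.sqrt x + Real.sqrt y := by
  have h : x + y ≤ (Real.sqrt x + Real.sqrt y)^2 := by
    nlinarith [Real.sq_sqrt hx, Real.sq_sqrt hy, Real.sqrt_nonneg x, Real.sqrt_nonneg y]
  refine le_trans (Real.sqrt_le_sqrt h) ?_
  rw [Real.sqrt_sq (by positivity)]

lemma abs_sum_le_card (F : ℕ → ℂ) (hF : ∀ j, ‖F j‖ = 1) (s : Finset ℕ) :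
    ‖∑ j ∈ s, F j‖ ≤ s.card := by
  refine (norm_sum_le _ _).trans ?_
  simp [hF]

/-- shift lemma -/
lemma shift_bound (F : ℕ → ℂ) (hF : ∀ j, ‖F j‖ = 1) (m r : ℕ) (hr : r ≤ m) :
    ‖(∑ j ∈ Finset.Ioc 0 m, F j) - ∑ j ∈ Finset.Ioc 0 m, F (j + r)‖ ≤ 2 * r := by
  have hmap : ∑ j ∈ Finset.Ioc 0 m, F (j + r) = ∑ j ∈ Finset.Ioc r (m + r), F j := by
    rw [show Finset.Ioc r (m + r) = Finset.Ioc (0 + r) (m + r) by rw [Nat.zero_add],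
      ← Finset.map_add_right_Ioc 0 m r, Finset.sum_map]
    simp [addRightEmbedding]
  have hsplit1 : (∑ j ∈ Finset.Ioc 0 r, F j) + ∑ j ∈ Finset.Ioc r (m + r), F j
      = ∑ j ∈ Finset.Ioc 0 (m + r), F j := Finset.sum_Ioc_consecutive _ (by omega) (by omega)
  have hsplit2 : (∑ j ∈ Finset.Ioc 0 m, F j) + ∑ j ∈ Finset.Ioc m (m + r), F j
      = ∑ j ∈ Finset.Ioc 0 (m + r), F j := Finset.sum_Ioc_consecutive _ (by omega) (by omega)
  have key : (∑ j ∈ Finset.Ioc 0 m, F j) - ∑ j ∈ Finset.Ioc 0 m, F (j + r)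
      = (∑ j ∈ Finset.Ioc 0 r, F j) - ∑ j ∈ Finset.Ioc m (m + r), F j := by
    rw [hmap]; linear_combination hsplit2 - hsplit1
  rw [key]
  calc ‖_‖ ≤ ‖∑ j ∈ Finset.Ioc 0 r, F j‖
        + ‖∑ j ∈ Finset.Ioc m (m + r), F j‖ := norm_sub_le _ _
    _ ≤ (r : ℝ) + r := by
        have h1 := abs_sum_le_card F hF (Finset.Ioc 0 r)
        have h2 := abs_sum_le_card F hF (Finset.Ioc m (m + r))
        rw [Nat.card_Ioc] at h1 h2
        simp only [Nat.sub_zero, Nat.add_sub_cancel_left] at h1 h2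
        exact add_le_add h1 h2
    _ = 2 * r := by ring

/-- the key expansion bound -/
lemma expansion (α b c : ℝ) (hα : Irrational α) (H m : ℕ) :
    ∑ j ∈ Finset.Ioc 0 m, (‖∑ r ∈ Finset.range H,
        ee (α * ((j + r : ℕ) : ℝ)^2 + b * ((j + r : ℕ) : ℝ) + c)‖)^2
      ≤ (H : ℝ) * m + ∑ r ∈ Finset.range H, ∑ s ∈ Finset.range H,
        (if r = s then 0 else 2 / ‖ee (2 * α * ((r : ℝ) - (s : ℝ))) - 1‖) := by
  set F : ℕ → ℂ := fun j => ee (α * (j : ℝ)^2 + b * (j : ℝ) + c) with hF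
  set z : ℕ → ℕ → ℂ := fun r s => ee (2 * α * ((r : ℝ) - (s : ℝ))) with hz
  set w : ℕ → ℕ → ℂ := fun r s => ee (α * ((r : ℝ)^2 - (s : ℝ)^2) + b * ((r : ℝ) - (s : ℝ))) with hw
  have key : ∀ j r s : ℕ, F (j + r) * (starRingEnd ℂ) (F (j + s))
      = (z r s) ^ j * w r s := by
    intro j r s
    rw [hF, conj_ee, ← ee_add, hz, ee_pow, hw, ← ee_add]
    congr 1
    push_cast
    ring
  set R : ℝ := ∑ j ∈ Finset.Ioc 0 m, (‖∑ r ∈ Finset.range H, F (j + r)‖)^2 with hR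
  have step1 : ∀ X : ℂ, (((‖X‖)^2 : ℝ) : ℂ) = X * (starRingEnd ℂ) X := by
    intro X
    rw [Complex.sq_norm]
    exact (Complex.mul_conj X).symm
  have hRC : (R : ℂ) = ∑ r ∈ Finset.range H, ∑ s ∈ Finset.range H,
      (∑ j ∈ Finset.Ioc 0 m, (z r s) ^ j) * w r s := by
    rw [hR]
    push_cast
    calc (∑ j ∈ Finset.Ioc 0 m, ((‖∑ r ∈ Finset.range H, F (j + r)‖ : ℝ) : ℂ)^2)
        = ∑ j ∈ Finset.Ioc 0 m, ∑ r ∈ Finset.range H, ∑ s ∈ Finset.range H,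
            (z r s) ^ j * w r s := by
          refine Finset.sum_congr rfl fun j _ => ?_
          rw [← Complex.ofReal_pow, step1, map_sum, Finset.sum_mul_sum]
          exact Finset.sum_congr rfl fun r _ => Finset.sum_congr rfl fun s _ => key j r s
      _ = ∑ r ∈ Finset.range H, ∑ s ∈ Finset.range H,
            (∑ j ∈ Finset.Ioc 0 m, (z r s) ^ j) * w r s := by
          rw [Finset.sum_comm]
          refine Finset.sum_congr rfl fun r _ => ?_
          rw [Finset.sum_comm]
          refine Finset.sum_congr rfl fun s _ => ?_
          rw [Finset.sum_mul]
  have hR0 : 0 ≤ R := Finset.sum_nonneg fun j _ => sq_nonneg _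
  have hRabs : R = ‖(R : ℂ)‖ := by
    rw [Complex.norm_real, Real.norm_eq_abs, abs_of_nonneg hR0]
  have hterm : ∀ r ∈ Finset.range H, ∀ s ∈ Finset.range H,
      ‖(∑ j ∈ Finset.Ioc 0 m, (z r s) ^ j) * w r s‖
        ≤ (if r = s then (m : ℝ) else 2 / ‖z r s - 1‖) := by
    intro r _ s _
    rw [norm_mul, hw, abs_ee, mul_one]
    by_cases hrs : r = s
    · subst hrs
      simp only [if_pos rfl]
      have : z r r = 1 := by rw [hz]; simp [ee_zero]
      rw [this]
      simp only [one_pow, Finset.sum_const, Nat.card_Ioc, Nat.sub_zero, nsmul_eq_mul, mul_one]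
      simp
    · rw [if_neg hrs]
      refine geom_bound _ (abs_ee _) ?_ m
      have hk : ((2 : ℤ) * ((r : ℤ) - (s : ℤ))) ≠ 0 := by
        simp only [Ne, mul_eq_zero, sub_eq_zero, OfNat.ofNat_ne_zero, false_or]
        exact_mod_cast hrs
      have harg : (2 * α * ((r : ℝ) - (s : ℝ))) = (((2 : ℤ) * ((r : ℤ) - (s : ℤ)) : ℤ) : ℝ) * α := by
        push_cast; ring
      exact ee_ne_one (harg ▸ hα.intCast_mul hk)
  calc R = ‖(R : ℂ)‖ := hRabs
    _ ≤ ∑ r ∈ Finset.range H, ∑ s ∈ Finset.range H,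
          (if r = s then (m : ℝ) else 2 / ‖z r s - 1‖) := by
        rw [hRC]
        refine (norm_sum_le _ _).trans (Finset.sum_le_sum fun r hr => ?_)
        refine (norm_sum_le _ _).trans (Finset.sum_le_sum fun s hs => ?_)
        exact hterm r hr s hs
    _ ≤ (H : ℝ) * m + ∑ r ∈ Finset.range H, ∑ s ∈ Finset.range H,
          (if r = s then 0 else 2 / ‖ee (2 * α * ((r : ℝ) - (s : ℝ))) - 1‖) := by
        have hpt : ∀ r s : ℕ, (if r = s then (m : ℝ) else 2 / ‖z r s - 1‖)
            = (if r = s then (m : ℝ) else 0)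
              + (if r = s then 0 else 2 / ‖ee (2 * α * ((r : ℝ) - (s : ℝ))) - 1‖) := by
          intro r s
          by_cases hrs : r = s <;> simp [hrs, hz]
        simp only [hpt, Finset.sum_add_distrib]
        have h1 : ∑ r ∈ Finset.range H, ∑ s ∈ Finset.range H, (if r = s then (m : ℝ) else 0)
            = (H : ℝ) * m := by
          rw [Finset.sum_congr rfl fun r hr => Finset.sum_ite_eq (Finset.range H) r fun _ => (m : ℝ)]
          rw [Finset.sum_congr rfl fun r hr => if_pos hr, Finset.sum_const, Finset.card_range,
            nsmul_eq_mul]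
        rw [h1]

set_option maxHeartbeats 1000000 in
open Complex in
theorem stmt_5 (α : ℝ) (hα : Irrational α) :
    ∀ ε : ℝ, 0 < ε → ∃ m₀ : ℕ, ∀ m : ℕ, m₀ ≤ m → ∀ b c : ℝ,
      ‖∑ j ∈ Finset.Icc 1 m,
        Complex.exp (2 * Real.pi * Complex.I *
          (α * (j : ℝ) ^ 2 + b * (j : ℝ) + c))‖ ≤ ε * m := by
  intro ε hε
  set H : ℕ := max 1 ⌈(9 : ℝ)/ε^2⌉₊ with hHdef
  have hH1 : 1 ≤ H := le_max_left _ _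
  have hH0 : (0:ℝ) < H := by
    have : (0:ℕ) < H := hH1
    exact_mod_cast this
  have hsqrtH : 3 / ε ≤ Real.sqrt H := by
    have h9 : (9 : ℝ)/ε^2 ≤ H := by
      refine (Nat.le_ceil _).trans (Nat.cast_le.mpr (le_max_right 1 ⌈(9 : ℝ)/ε^2⌉₊))
    have h' : (3/ε)^2 ≤ (H : ℝ) := by
      calc (3/ε)^2 = 9/ε^2 := by ring
        _ ≤ (H:ℝ) := h9
    calc 3/ε = Real.sqrt ((3/ε)^2) := (Real.sqrt_sq (by positivity)).symm
      _ ≤ Real.sqrt H := Real.sqrt_le_sqrt h'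
  set C : ℝ := ∑ r ∈ Finset.range H, ∑ s ∈ Finset.range H,
      (if r = s then 0 else 2 / ‖ee (2 * α * ((r : ℝ) - (s : ℝ))) - 1‖) with hCdef
  have hC0 : 0 ≤ C := by
    refine Finset.sum_nonneg fun r _ => Finset.sum_nonneg fun s _ => ?_
    split <;> positivity
  clear_value C
  refine ⟨H + 1 + ⌈9 * C / ε^2⌉₊ + ⌈6 * (H : ℝ) / ε⌉₊, ?_⟩
  intro m hm b c
  have hmH : H ≤ m := by omega
  have hm1 : 1 ≤ m := by omega
  have hm0 : (0:ℝ) < m := by exact_mod_cast hm1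
  have hmC : 9 * C / ε^2 ≤ m :=
    (Nat.le_ceil _).trans (Nat.cast_le.mpr (by omega : ⌈9 * C / ε^2⌉₊ ≤ m))
  have hmHe : 6 * (H:ℝ) / ε ≤ m :=
    (Nat.le_ceil _).trans (Nat.cast_le.mpr (by omega : ⌈6 * (H:ℝ) / ε⌉₊ ≤ m))
  set F : ℕ → ℂ := fun j => ee (α * (j : ℝ)^2 + b * (j : ℝ) + c) with hF
  have hFabs : ∀ j, ‖F j‖ = 1 := fun j => abs_ee _
  have hsum_eq : (∑ j ∈ Finset.Icc 1 m, Complex.exp (2 * Real.pi * Complex.I *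
      (α * (j:ℝ)^2 + b*(j:ℝ) + c))) = ∑ j ∈ Finset.Ioc 0 m, F j := by
    rw [show Finset.Icc 1 m = Finset.Ioc 0 m from rfl]
    refine Finset.sum_congr rfl fun j _ => ?_
    rw [hF]
    simp only [ee]
    congr 1
    push_cast
    ring
  rw [hsum_eq]
  set S : ℂ := ∑ j ∈ Finset.Ioc 0 m, F j with hS
  set g : ℕ → ℂ := fun j => ∑ r ∈ Finset.range H, F (j + r) with hg
  set B : ℝ := ‖∑ j ∈ Finset.Ioc 0 m, g j‖ with hB
  have hB0 : 0 ≤ B := norm_nonneg _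
  -- Step 1
  have h1 : (H : ℝ) * ‖S‖ ≤ B + 2 * (H:ℝ)^2 := by
    have hdiff : ‖(H : ℂ) * S - ∑ j ∈ Finset.Ioc 0 m, g j‖ ≤ 2 * (H:ℝ)^2 := by
      have hrepr : (H : ℂ) * S - ∑ j ∈ Finset.Ioc 0 m, g j
          = ∑ r ∈ Finset.range H, (S - ∑ j ∈ Finset.Ioc 0 m, F (j + r)) := by
        rw [Finset.sum_sub_distrib, Finset.sum_const, Finset.card_range, nsmul_eq_mul]
        congr 1
        rw [hg, Finset.sum_comm]
      rw [hrepr]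
      refine (norm_sum_le _ _).trans ?_
      calc ∑ r ∈ Finset.range H, ‖S - ∑ j ∈ Finset.Ioc 0 m, F (j + r)‖
          ≤ ∑ r ∈ Finset.range H, 2 * (H:ℝ) := by
            refine Finset.sum_le_sum fun r hr => ?_
            refine (shift_bound F hFabs m r ((Finset.mem_range.1 hr).le.trans hmH)).trans ?_
            have : (r:ℝ) ≤ H := by exact_mod_cast (Finset.mem_range.1 hr).le
            linarith
        _ = 2 * (H:ℝ)^2 := by
            rw [Finset.sum_const, Finset.card_range, nsmul_eq_mul]; ring
    have habs : (H:ℝ) * ‖S‖ = ‖(H:ℂ) * S‖ := by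
      rw [norm_mul, Complex.norm_natCast]
    rw [habs]
    calc ‖(H:ℂ) * S‖
        ≤ ‖∑ j ∈ Finset.Ioc 0 m, g j‖
          + ‖(H:ℂ) * S - ∑ j ∈ Finset.Ioc 0 m, g j‖ := by
          have := norm_add_le (∑ j ∈ Finset.Ioc 0 m, g j)
            ((H:ℂ) * S - ∑ j ∈ Finset.Ioc 0 m, g j)
          simpa using this
      _ ≤ B + 2 * (H:ℝ)^2 := by rw [← hB]; linarith [hdiff]
  -- Step 2: Cauchy-Schwarz
  have h2 : B^2 ≤ (m:ℝ) * ∑ j ∈ Finset.Ioc 0 m, (‖g j‖)^2 := by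
    have ha : B ≤ ∑ j ∈ Finset.Ioc 0 m, ‖g j‖ := by
      rw [hB]
      refine (norm_sum_le _ _).trans (le_of_eq ?_)
      rfl
    have hb := sq_sum_le_card_mul_sum_sq (s := Finset.Ioc 0 m)
      (f := fun j => ‖g j‖)
    have hcard : (Finset.Ioc 0 m).card = m := by simp
    rw [hcard] at hb
    calc B^2 ≤ (∑ j ∈ Finset.Ioc 0 m, ‖g j‖)^2 := by
          exact pow_le_pow_left₀ hB0 ha 2
      _ ≤ (m:ℝ) * ∑ j ∈ Finset.Ioc 0 m, (‖g j‖)^2 := hb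
  -- Step 3: expansion
  have h3 : ∑ j ∈ Finset.Ioc 0 m, (‖g j‖)^2 ≤ (H:ℝ)*m + C := by
    rw [hCdef]
    simpa only [hg, hF] using expansion α b c hα H m
  -- combine: B ≤ √H m + √(mC)
  have hBle : B ≤ Real.sqrt H * m + Real.sqrt ((m:ℝ) * C) := by
    have hsq : B^2 ≤ (H:ℝ)*(m:ℝ)^2 + (m:ℝ)*C := by nlinarith
    calc B = Real.sqrt (B^2) := (Real.sqrt_sq hB0).symm
      _ ≤ Real.sqrt ((H:ℝ)*(m:ℝ)^2 + (m:ℝ)*C) := Real.sqrt_le_sqrt hsq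
      _ ≤ Real.sqrt ((H:ℝ)*(m:ℝ)^2) + Real.sqrt ((m:ℝ)*C) :=
          sqrt_add_le' _ _ (by positivity) (by positivity)
      _ = Real.sqrt H * m + Real.sqrt ((m:ℝ)*C) := by
          rw [Real.sqrt_mul (by positivity), Real.sqrt_sq (by positivity)]
  -- final numeric assembly
  have ha : Real.sqrt (H:ℝ) * m ≤ (ε/3) * ((H:ℝ) * m) := by
    have h' : 1 ≤ (ε/3) * Real.sqrt H := by
      have h'' := mul_le_mul_of_nonneg_left hsqrtH (by positivity : (0:ℝ) ≤ ε/3)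
      calc (1:ℝ) = (ε/3)*(3/ε) := by field_simp
        _ ≤ (ε/3)*Real.sqrt H := h''
    calc Real.sqrt H * m = 1 * (Real.sqrt H * m) := by ring
      _ ≤ ((ε/3) * Real.sqrt H) * (Real.sqrt H * m) := by
          refine mul_le_mul_of_nonneg_right h' (by positivity)
      _ = (ε/3) * ((Real.sqrt H * Real.sqrt H) * m) := by ring
      _ = (ε/3) * ((H:ℝ) * m) := by rw [Real.mul_self_sqrt (by positivity)]
  have hb2 : Real.sqrt ((m:ℝ)*C) ≤ (ε/3) * ((H:ℝ) * m) := by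
    have hCm : (m:ℝ)*C ≤ ((ε/3)*m)^2 := by
      have : C ≤ ε^2 * m / 9 := by
        rw [div_le_iff₀ (by positivity)] at hmC
        nlinarith
      nlinarith
    calc Real.sqrt ((m:ℝ)*C) ≤ Real.sqrt (((ε/3)*m)^2) := Real.sqrt_le_sqrt hCm
      _ = (ε/3)*m := Real.sqrt_sq (by positivity)
      _ ≤ (ε/3) * ((H:ℝ)*m) := by
          have h1H : (1:ℝ) ≤ H := by exact_mod_cast hH1
          nlinarith [mul_nonneg (mul_nonneg hε.le hm0.le) (sub_nonneg.mpr h1H)]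
  have hc : 2 * (H:ℝ)^2 ≤ (ε/3) * ((H:ℝ) * m) := by
    rw [div_le_iff₀ (by positivity)] at hmHe
    nlinarith
  have final : (H:ℝ) * ‖S‖ ≤ (H:ℝ) * (ε * m) := by
    calc (H:ℝ) * ‖S‖ ≤ B + 2*(H:ℝ)^2 := h1
      _ ≤ (Real.sqrt H * m + Real.sqrt ((m:ℝ)*C)) + 2*(H:ℝ)^2 := by linarith
      _ ≤ (ε/3) * ((H:ℝ)*m) + (ε/3) * ((H:ℝ)*m) + (ε/3) * ((H:ℝ)*m) := by linarith
      _ = (H:ℝ) * (ε * m) := by ring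
  exact le_of_mul_le_mul_left final hH0
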